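/- arXiv:2505.03719 — 3 statements merged into one kernel-verified Lean document; each statement's English description precedes it below -/
import Mathlib

section
/- Let V ⊆ ℝ^m be a linear subspace and let F : ℝ^m → ℝ be convex, differentiable, and L-smooth, with F μ-strongly convex on V for some 0 < μ < L; suppose ∇F(v) ∈ V for every v ∈ V and F attains its global minimum at some y* ∈ V. Set κ = L/μ and β = (√κ − 1)/(√κ + 1). Let ε₁, ε₂, … ≥ 0 and define sequences by y⁰ = v⁰ = 0 and, for k ≥ 0: y^{k+1} = v^k − (1/L)(∇F(v^k) + e^{k+1}) where e^{k+1} ∈ V and ‖e^{k+1}‖ ≤ ε_{k+1}, and v^{k+1} = y^{k+1} + β(y^{k+1} − y^k). Then for all k ≥ 1: F(y^k) − F(y*) ≤ (1 − 1/√κ)^k · ( √(2(F(y⁰) − F(y*))) + √(2/μ) · Σ_{i=1}^{k} (1 − 1/√κ)^{−i/2} ε_i )². -/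
open scoped RealInnerProductSpace

set_option maxHeartbeats 4000000

lemma dirDeriv' {m : ℕ} (F : EuclideanSpace ℝ (Fin m) → ℝ)
    (hFdiff : Differentiable ℝ F) (u d : EuclideanSpace ℝ (Fin m)) (t₀ : ℝ) :
    HasDerivAt (fun t : ℝ => F (u + t • d)) ⟪gradient F (u + t₀ • d), d⟫ t₀ := by
  have hline : HasDerivAt (fun t : ℝ => u + t • d) d t₀ := by
    simpa using ((hasDerivAt_id t₀).smul_const d).const_add u
  have hgrad := (hFdiff (u + t₀ • d)).hasGradientAt
  rw [hasGradientAt_iff_hasFDerivAt] at hgrad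
  have := hgrad.comp_hasDerivAt t₀ hline
  simp only [InnerProductSpace.toDual_apply_apply] at this
  exact this

lemma smooth_upper {m : ℕ} (L : ℝ) (hL : 0 < L) (F : EuclideanSpace ℝ (Fin m) → ℝ)
    (hFdiff : Differentiable ℝ F)
    (hFsmooth : ∀ u v : EuclideanSpace ℝ (Fin m),
      ‖gradient F u - gradient F v‖ ≤ L * ‖u - v‖)
    (u w : EuclideanSpace ℝ (Fin m)) :
    F w ≤ F u + ⟪gradient F u, w - u⟫ + L / 2 * ‖w - u‖ ^ 2 := by
  set d := w - u with hd
  have hgradcont : Continuous (gradient F) := by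
    have : LipschitzWith (Real.toNNReal L) (gradient F) := by
      apply LipschitzWith.of_dist_le_mul
      intro x y
      rw [dist_eq_norm, dist_eq_norm, Real.coe_toNNReal L hL.le]
      exact hFsmooth x y
    exact this.continuous
  have hφ' : Continuous (fun t : ℝ => ⟪gradient F (u + t • d), d⟫) := by
    exact (hgradcont.comp (by continuity)).inner continuous_const
  have hFTC : ∫ t in (0:ℝ)..1, ⟪gradient F (u + t • d), d⟫
      = F (u + (1:ℝ) • d) - F (u + (0:ℝ) • d) := by
    apply intervalIntegral.integral_eq_sub_of_hasDerivAt (f := fun t : ℝ => F (u + t • d))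
    · intro t _
      exact dirDeriv' F hFdiff u d t
    · exact hφ'.intervalIntegrable 0 1
  have hbound : ∀ t ∈ Set.Icc (0:ℝ) 1,
      ⟪gradient F (u + t • d), d⟫ ≤ ⟪gradient F u, d⟫ + L * ‖d‖ ^ 2 * t := by
    intro t ht
    have h1 : ⟪gradient F (u + t • d), d⟫ - ⟪gradient F u, d⟫
        = ⟪gradient F (u + t • d) - gradient F u, d⟫ := by
      rw [inner_sub_left]
    have h2 : ⟪gradient F (u + t • d) - gradient F u, d⟫ ≤ L * ‖d‖ ^ 2 * t := by
      calc ⟪gradient F (u + t • d) - gradient F u, d⟫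
          ≤ ‖gradient F (u + t • d) - gradient F u‖ * ‖d‖ := real_inner_le_norm _ _
        _ ≤ (L * ‖(u + t • d) - u‖) * ‖d‖ := by
            gcongr; exact hFsmooth _ _
        _ = L * ‖d‖ ^ 2 * t := by
            have : ‖(u + t • d) - u‖ = t * ‖d‖ := by
              simp [norm_smul, abs_of_nonneg ht.1]
            rw [this]; ring
    linarith
  have hint : ∫ t in (0:ℝ)..1, ⟪gradient F (u + t • d), d⟫
      ≤ ∫ t in (0:ℝ)..1, (⟪gradient F u, d⟫ + L * ‖d‖ ^ 2 * t) := by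
    apply intervalIntegral.integral_mono_on (by norm_num) (hφ'.intervalIntegrable 0 1)
    · exact ((by continuity : Continuous fun t : ℝ =>
        ⟪gradient F u, d⟫ + L * ‖d‖ ^ 2 * t).intervalIntegrable 0 1)
    · exact hbound
  have hval : ∫ t in (0:ℝ)..1, (⟪gradient F u, d⟫ + L * ‖d‖ ^ 2 * t)
      = ⟪gradient F u, d⟫ + L / 2 * ‖d‖ ^ 2 := by
    rw [intervalIntegral.integral_add (intervalIntegrable_const)
      ((by continuity : Continuous fun t : ℝ => L * ‖d‖ ^ 2 * t).intervalIntegrable 0 1),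
      intervalIntegral.integral_const_mul]
    simp [integral_id]
    ring
  have hfin : F (u + (1:ℝ) • d) - F (u + (0:ℝ) • d)
      ≤ ⟪gradient F u, d⟫ + L / 2 * ‖d‖ ^ 2 := by
    rw [← hFTC]; rw [hval] at hint; exact hint
  simp only [one_smul, zero_smul, add_zero] at hfin
  have hw : u + d = w := by rw [hd]; abel
  rw [hw] at hfin
  linarith

lemma sc_lower {m : ℕ} (c : ℝ) (F : EuclideanSpace ℝ (Fin m) → ℝ)
    (hFdiff : Differentiable ℝ F) (u w : EuclideanSpace ℝ (Fin m))
    (h : ∀ θ : ℝ, 0 ≤ θ → θ ≤ 1 →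
      F (θ • u + (1 - θ) • w) ≤ θ * F u + (1 - θ) * F w
        - c / 2 * (θ * (1 - θ) * ‖u - w‖ ^ 2)) :
    F w + ⟪gradient F w, u - w⟫ + c / 2 * ‖u - w‖ ^ 2 ≤ F u := by
  set d := u - w with hd
  set φ : ℝ → ℝ := fun t => F (w + t • d) with hφ
  have hφ0 : φ 0 = F w := by simp [hφ]
  have hderiv : HasDerivAt φ ⟪gradient F w, d⟫ 0 := by
    have := dirDeriv' F hFdiff w d 0
    simpa using this
  have hslope : Filter.Tendsto (slope φ 0) (nhdsWithin 0 (Set.Ioi (0:ℝ)))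
      (nhds ⟪gradient F w, d⟫) := by
    have h2 := hasDerivAt_iff_tendsto_slope.1 hderiv
    exact h2.mono_left (nhdsWithin_mono 0 (fun x hx => ne_of_gt hx))
  have hrhs : Filter.Tendsto (fun t : ℝ => F u - F w - c / 2 * ((1 - t) * ‖d‖ ^ 2))
      (nhdsWithin 0 (Set.Ioi (0:ℝ))) (nhds (F u - F w - c / 2 * ‖d‖ ^ 2)) := by
    have hc : Continuous (fun t : ℝ => F u - F w - c / 2 * ((1 - t) * ‖d‖ ^ 2)) := by
      continuity
    have := (hc.tendsto 0).mono_left (nhdsWithin_le_nhds (s := Set.Ioi (0:ℝ)))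
    simpa using this
  have hle : ⟪gradient F w, d⟫ ≤ F u - F w - c / 2 * ‖d‖ ^ 2 := by
    apply le_of_tendsto_of_tendsto hslope hrhs
    apply Filter.eventually_of_mem
      (Ioc_mem_nhdsGT_of_mem (Set.mem_Ico.2 ⟨le_refl 0, zero_lt_one⟩))
    intro t ht
    have h1 := h t ht.1.le ht.2
    have heq : t • u + (1 - t) • w = w + t • d := by rw [hd]; module
    rw [heq] at h1
    have hslope_eq : slope φ 0 t = (φ t - φ 0) / t := by
      rw [slope_def_field]; rw [sub_zero]
    rw [hslope_eq, hφ0, div_le_iff₀ ht.1]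
    have hnorm : ‖u - w‖ = ‖d‖ := by rw [hd]
    rw [hnorm] at h1
    nlinarith [h1]
  linarith

lemma key_identity {m : ℕ} (μ s L θ : ℝ) (hμ : μ ≠ 0) (hs : s ≠ 0)
    (hL : L = μ * s ^ 2) (hθ : θ = 1 / s)
    (g e B D G A Z : EuclideanSpace ℝ (Fin m))
    (hG : G = g + e) (hA : A = B + s • D)
    (hZ : Z = (1 - θ) • A + θ • B - (s / L) • G) :
    μ / 2 * ‖Z‖ ^ 2 = (1 / L) * ⟪g, G⟫ - (1 / (2 * L)) * ⟪G, G⟫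
      - θ * ⟪g, B⟫ + θ * (μ / 2) * ‖B‖ ^ 2 - (1 - θ) * ⟪g, D⟫
      + (1 - θ) * (μ / 2) * ‖A‖ ^ 2 - θ * ⟪e, Z⟫
      - θ * (1 - θ) * (μ / 2) * ‖A - B‖ ^ 2 := by
  have hLne : L ≠ 0 := by rw [hL]; positivity
  subst hG hA hZ hθ hL
  simp only [← real_inner_self_eq_norm_sq]
  simp only [inner_sub_left, inner_sub_right, inner_add_left, inner_add_right,
    real_inner_smul_left, real_inner_smul_right, real_inner_comm]
  field_simp
  ring

lemma sq_le_imp_le (a b c : ℝ) (ha : 0 ≤ a) (hb : 0 ≤ b) (hc : 0 ≤ c)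
    (h : a ^ 2 ≤ b ^ 2 + c * a) : a ≤ b + c := by
  by_contra hcon
  push_neg at hcon
  have h1 : b ≤ a := by linarith
  have h2 : b < a - c := by linarith
  have h3 : b * b < a * (a - c) := mul_lt_mul' h1 h2 hb (by linarith)
  have h4 : a * (a - c) = a ^ 2 - c * a := by ring
  have h5 : b * b = b ^ 2 := by ring
  linarith

/-- Inexact accelerated gradient descent under strong convexity on a subspace `V`:
if `F` is convex, differentiable, `L`-smooth, `μ`-strongly convex on `V` (`0 < μ < L`),
`∇F` maps `V` to `V`, and `F` attains its global minimum at `y* ∈ V`, then the inexact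
accelerated iterates starting from `0`, with errors `e^{k+1} ∈ V`, `‖e^{k+1}‖ ≤ ε_{k+1}`,
satisfy for all `k ≥ 1`:
`F(y^k) − F(y*) ≤ (1 − 1/√κ)^k (√(2(F(y⁰) − F(y*))) + √(2/μ) Σ_{i=1}^k (1−1/√κ)^{−i/2} ε_i)²`
where `κ = L/μ`. -/
theorem stmt9 {m : ℕ} (μ L : ℝ) (hμ : 0 < μ) (hμL : μ < L)
    (V : Submodule ℝ (EuclideanSpace ℝ (Fin m)))
    (F : EuclideanSpace ℝ (Fin m) → ℝ)
    (hFconv : ConvexOn ℝ Set.univ F)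
    (hFdiff : Differentiable ℝ F)
    (hFsmooth : ∀ u v : EuclideanSpace ℝ (Fin m),
      ‖gradient F u - gradient F v‖ ≤ L * ‖u - v‖)
    (hFsc : ∀ u ∈ V, ∀ v ∈ V, ∀ θ : ℝ, 0 ≤ θ → θ ≤ 1 →
      F (θ • u + (1 - θ) • v) ≤ θ * F u + (1 - θ) * F v
        - μ / 2 * (θ * (1 - θ) * ‖u - v‖ ^ 2))
    (hFgradV : ∀ v ∈ V, gradient F v ∈ V)
    (ystar : EuclideanSpace ℝ (Fin m)) (hystarV : ystar ∈ V)
    (hystar : ∀ z, F ystar ≤ F z)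
    (κ β : ℝ) (hκ : κ = L / μ) (hβ : β = (Real.sqrt κ - 1) / (Real.sqrt κ + 1))
    (ε : ℕ → ℝ) (hε : ∀ k, 0 ≤ ε k)
    (y v : ℕ → EuclideanSpace ℝ (Fin m))
    (e : ℕ → EuclideanSpace ℝ (Fin m))
    (hy0 : y 0 = 0) (hv0 : v 0 = 0)
    (heV : ∀ k, e (k + 1) ∈ V)
    (heε : ∀ k, ‖e (k + 1)‖ ≤ ε (k + 1))
    (hyk : ∀ k, y (k + 1) = v k - (1 / L) • (gradient F (v k) + e (k + 1)))
    (hvk : ∀ k, v (k + 1) = y (k + 1) + β • (y (k + 1) - y k)) :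
    ∀ k : ℕ, 1 ≤ k →
      F (y k) - F ystar ≤ (1 - 1 / Real.sqrt κ) ^ k *
        (Real.sqrt (2 * (F (y 0) - F ystar))
          + Real.sqrt (2 / μ) *
            ∑ i ∈ Finset.Icc 1 k, (1 - 1 / Real.sqrt κ) ^ (-(i : ℝ) / 2) * ε i) ^ 2 := by
  have hL : 0 < L := hμ.trans hμL
  have hκ1 : 1 < κ := by rw [hκ]; exact (one_lt_div hμ).2 hμL
  set s := Real.sqrt κ with hsdef
  have hs1 : 1 < s := by
    rw [hsdef, show (1:ℝ) = Real.sqrt 1 by simp]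
    exact Real.sqrt_lt_sqrt (by norm_num) hκ1
  have hs0 : 0 < s := lt_trans one_pos hs1
  have hsne : s ≠ 0 := ne_of_gt hs0
  have hs2 : s ^ 2 = κ := Real.sq_sqrt (by linarith)
  have hLs : L = μ * s ^ 2 := by rw [hs2, hκ]; field_simp
  have hLne : L ≠ 0 := ne_of_gt hL
  set q : ℝ := 1 - 1 / s with hqdef
  set θ : ℝ := 1 / s with hθdef
  have hθ0 : 0 < θ := by rw [hθdef]; positivity
  have hθ1 : θ < 1 := by rw [hθdef, div_lt_one hs0]; exact hs1
  have hqθ : q = 1 - θ := by rw [hqdef, hθdef]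
  have hq0 : 0 < q := by rw [hqθ]; linarith
  -- iterates stay in V
  have hmem : ∀ k, y k ∈ V ∧ v k ∈ V := by
    intro k
    induction k with
    | zero => rw [hy0, hv0]; exact ⟨zero_mem V, zero_mem V⟩
    | succ n ih =>
      have hy' : y (n + 1) ∈ V := by
        rw [hyk n]
        exact sub_mem ih.2 (Submodule.smul_mem V _ (add_mem (hFgradV _ ih.2) (heV n)))
      exact ⟨hy', by rw [hvk n]; exact add_mem hy' (Submodule.smul_mem V _ (sub_mem hy' ih.1))⟩
  -- strong convexity gradient inequality on V
  have hgrad : ∀ u ∈ V, ∀ w ∈ V,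
      F w + ⟪gradient F w, u - w⟫ + μ / 2 * ‖u - w‖ ^ 2 ≤ F u := by
    intro u hu w hw
    exact sc_lower μ F hFdiff u w (fun t h0 h1 => hFsc u hu w hw t h0 h1)
  -- gradient vanishes at the minimizer
  have hgmin : gradient F ystar = 0 := by
    have hmin : IsLocalMin F ystar := Filter.Eventually.of_forall hystar
    have hfd := (hFdiff ystar).hasGradientAt
    rw [hasGradientAt_iff_hasFDerivAt] at hfd
    have h0 := hmin.hasFDerivAt_eq_zero hfd
    have h1 : ⟪gradient F ystar, gradient F ystar⟫ = 0 := by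
      have := congrArg (fun (f : EuclideanSpace ℝ (Fin m) →L[ℝ] ℝ) =>
        f (gradient F ystar)) h0
      simpa only [InnerProductSpace.toDual_apply_apply, ContinuousLinearMap.zero_apply] using this
    exact inner_self_eq_zero.1 h1
  -- potential
  set z : ℕ → EuclideanSpace ℝ (Fin m) := fun k => y k + (s + 1) • (v k - y k) with hzdef
  set Φ : ℕ → ℝ := fun k => F (y k) - F ystar + μ / 2 * ‖z k - ystar‖ ^ 2 with hΦdef
  have hΦ0 : ∀ k, 0 ≤ Φ k := by
    intro k
    have h1 := hystar (y k)
    have hn : 0 ≤ μ / 2 * ‖z k - ystar‖ ^ 2 := by positivity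
    simp only [hΦdef]
    linarith
  have hΦlb : ∀ k, F (y k) - F ystar ≤ Φ k := by
    intro k
    have hn : 0 ≤ μ / 2 * ‖z k - ystar‖ ^ 2 := by positivity
    simp only [hΦdef]
    linarith
  have hΦz : ∀ k, μ / 2 * ‖z k - ystar‖ ^ 2 ≤ Φ k := by
    intro k
    have h1 := hystar (y k)
    simp only [hΦdef]
    linarith
  -- base bound
  have hbase : Φ 0 ≤ 2 * (F (y 0) - F ystar) := by
    have hz0 : z 0 - ystar = y 0 - ystar := by
      simp only [hzdef, hy0, hv0]
      simp
    have hg := hgrad (y 0) (hmem 0).1 ystar hystarV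
    rw [hgmin] at hg
    simp only [inner_zero_left] at hg
    simp only [hΦdef, hz0]
    linarith
  -- one-step inequality
  have hstep : ∀ k, Real.sqrt (Φ (k + 1)) ≤
      Real.sqrt q * Real.sqrt (Φ k) + Real.sqrt (2 / μ) * ε (k + 1) := by
    intro k
    obtain ⟨hykV, hvkV⟩ := hmem k
    set g : EuclideanSpace ℝ (Fin m) := gradient F (v k) with hgdef
    set ee : EuclideanSpace ℝ (Fin m) := e (k + 1) with heedef
    set G : EuclideanSpace ℝ (Fin m) := g + ee with hGdef
    set B : EuclideanSpace ℝ (Fin m) := v k - ystar with hBdef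
    set D : EuclideanSpace ℝ (Fin m) := v k - y k with hDdef
    set A : EuclideanSpace ℝ (Fin m) := z k - ystar with hAdef
    set Z : EuclideanSpace ℝ (Fin m) := z (k + 1) - ystar with hZdef
    have hA : A = B + s • D := by
      simp only [hAdef, hBdef, hDdef, hzdef]
      module
    have hs1' : s + 1 ≠ 0 := by positivity
    have hZ : Z = (1 - θ) • A + θ • B - (s / L) • G := by
      simp only [hZdef, hAdef, hBdef, hzdef, hGdef, hvk k, hyk k, hβ, hθdef, ← hgdef, ← heedef]
      match_scalars <;> (field_simp; try ring)
    have hid := key_identity μ s L θ (ne_of_gt hμ) hsne hLs hθdef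
      g ee B D G A Z hGdef hA hZ
    -- smoothness upper bound
    have h1 : F (y (k + 1)) ≤ F (v k)
        - (1 / L) * ⟪g, G⟫ + (1 / (2 * L)) * ⟪G, G⟫ := by
      have h1' := smooth_upper L hL F hFdiff hFsmooth (v k) (y (k + 1))
      simp only [← hgdef] at h1'
      have hyv : y (k + 1) - v k = -((1 / L) • G) := by
        rw [hyk k]; simp only [hGdef, hgdef, heedef]; module
      rw [hyv, inner_neg_right, real_inner_smul_right, norm_neg, norm_smul] at h1'
      have hnn : ‖(1 / L : ℝ)‖ = 1 / L := by
        rw [Real.norm_eq_abs, abs_of_pos (by positivity)]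
      rw [hnn] at h1'
      have hGsq : ‖G‖ ^ 2 = ⟪G, G⟫ := (real_inner_self_eq_norm_sq G).symm
      have hcalc : L / 2 * (1 / L * ‖G‖) ^ 2 = 1 / (2 * L) * ⟪G, G⟫ := by
        rw [← hGsq]; field_simp
      linarith
    -- strong convexity at ystar and y k
    have h2 : F (v k) - ⟪g, B⟫ + μ / 2 * ‖B‖ ^ 2 ≤ F ystar := by
      have hh := hgrad ystar hystarV (v k) hvkV
      simp only [← hgdef] at hh
      have he1 : ystar - v k = -B := by rw [hBdef]; abel
      rw [he1, inner_neg_right, norm_neg] at hh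
      linarith
    have h3 : F (v k) - ⟪g, D⟫ + μ / 2 * ‖D‖ ^ 2 ≤ F (y k) := by
      have hh := hgrad (y k) hykV (v k) hvkV
      simp only [← hgdef] at hh
      have he1 : y k - v k = -D := by rw [hDdef]; abel
      rw [he1, inner_neg_right, norm_neg] at hh
      linarith
    have hCS : -⟪ee, Z⟫ ≤ ‖ee‖ * ‖Z‖ := by
      have h4 := abs_real_inner_le_norm ee Z
      have h5 := neg_abs_le (⟪ee, Z⟫)
      linarith
    have hAB : ‖A - B‖ ^ 2 = s ^ 2 * ‖D‖ ^ 2 := by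
      have hh : A - B = s • D := by rw [hA]; abel
      rw [hh, norm_smul, Real.norm_eq_abs, mul_pow, sq_abs]
    have t2 := mul_le_mul_of_nonneg_left h2 hθ0.le
    have t3 := mul_le_mul_of_nonneg_left h3 (by linarith : (0:ℝ) ≤ 1 - θ)
    have t4 := mul_le_mul_of_nonneg_left hCS hθ0.le
    have t5 : 0 ≤ θ * (1 - θ) * (μ / 2) * (s ^ 2 * ‖D‖ ^ 2) := by
      apply mul_nonneg
      apply mul_nonneg
      apply mul_nonneg hθ0.le (by linarith)
      · positivity
      · positivity
    have t6 : 0 ≤ (1 - θ) * (μ / 2) * ‖D‖ ^ 2 := by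
      apply mul_nonneg (mul_nonneg (by linarith) (by positivity)) (by positivity)
    have hmain : Φ (k + 1) ≤ q * Φ k + θ * (‖ee‖ * ‖Z‖) := by
      simp only [hΦdef]
      rw [← hZdef, ← hAdef, hqθ, hid, hAB]
      linarith only [h1, t2, t3, t4, t5, t6]
    -- turn into sqrt inequality
    have ha0 : 0 ≤ Real.sqrt (Φ (k + 1)) := Real.sqrt_nonneg _
    have ha2 : Real.sqrt (Φ (k + 1)) ^ 2 = Φ (k + 1) := Real.sq_sqrt (hΦ0 (k + 1))
    have hb0 : 0 ≤ Real.sqrt q * Real.sqrt (Φ k) :=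
      mul_nonneg (Real.sqrt_nonneg q) (Real.sqrt_nonneg _)
    have hb2 : (Real.sqrt q * Real.sqrt (Φ k)) ^ 2 = q * Φ k := by
      rw [mul_pow, Real.sq_sqrt hq0.le, Real.sq_sqrt (hΦ0 k)]
    have hc0 : 0 ≤ Real.sqrt (2 / μ) * ε (k + 1) :=
      mul_nonneg (Real.sqrt_nonneg _) (hε _)
    have hZle : ‖Z‖ ≤ Real.sqrt (2 / μ) * Real.sqrt (Φ (k + 1)) := by
      have hz1 := hΦz (k + 1)
      rw [← hZdef] at hz1
      have hz2 : ‖Z‖ ^ 2 ≤ 2 / μ * Real.sqrt (Φ (k + 1)) ^ 2 := by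
        rw [ha2]
        have h6 := mul_le_mul_of_nonneg_left hz1 (le_of_lt (by positivity : (0:ℝ) < 2 / μ))
        have h7 : 2 / μ * (μ / 2 * ‖Z‖ ^ 2) = ‖Z‖ ^ 2 := by
          field_simp
        linarith
      calc ‖Z‖ = Real.sqrt (‖Z‖ ^ 2) := (Real.sqrt_sq (norm_nonneg Z)).symm
        _ ≤ Real.sqrt (2 / μ * Real.sqrt (Φ (k + 1)) ^ 2) := Real.sqrt_le_sqrt hz2
        _ = Real.sqrt (2 / μ) * Real.sqrt (Φ (k + 1)) := by
            rw [Real.sqrt_mul (by positivity) _, Real.sqrt_sq ha0]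
    have hprod : θ * (‖ee‖ * ‖Z‖)
        ≤ (Real.sqrt (2 / μ) * ε (k + 1)) * Real.sqrt (Φ (k + 1)) := by
      have hee0 : (0:ℝ) ≤ ‖ee‖ := norm_nonneg _
      have hZ0 : (0:ℝ) ≤ ‖Z‖ := norm_nonneg _
      calc θ * (‖ee‖ * ‖Z‖) ≤ 1 * (‖ee‖ * ‖Z‖) :=
            mul_le_mul_of_nonneg_right (le_of_lt hθ1) (mul_nonneg hee0 hZ0)
        _ = ‖ee‖ * ‖Z‖ := one_mul _
        _ ≤ ε (k + 1) * (Real.sqrt (2 / μ) * Real.sqrt (Φ (k + 1))) := by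
            apply mul_le_mul (heε k) hZle hZ0 (hε _)
        _ = (Real.sqrt (2 / μ) * ε (k + 1)) * Real.sqrt (Φ (k + 1)) := by ring
    have hkey : Real.sqrt (Φ (k + 1)) ^ 2 ≤ (Real.sqrt q * Real.sqrt (Φ k)) ^ 2
        + (Real.sqrt (2 / μ) * ε (k + 1)) * Real.sqrt (Φ (k + 1)) := by
      rw [ha2, hb2]
      calc Φ (k + 1) ≤ q * Φ k + θ * (‖ee‖ * ‖Z‖) := hmain
        _ ≤ q * Φ k + Real.sqrt (2 / μ) * ε (k + 1) * Real.sqrt (Φ (k + 1)) := by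
            linarith [hprod]
    exact sq_le_imp_le _ _ _ ha0 hb0 hc0 hkey
  -- the running sum
  set S : ℕ → ℝ := fun k => Real.sqrt (2 * (F (y 0) - F ystar))
      + Real.sqrt (2 / μ) * ∑ i ∈ Finset.Icc 1 k, q ^ (-(i : ℝ) / 2) * ε i with hSdef
  have hSnonneg : ∀ k, 0 ≤ S k := by
    intro k
    simp only [hSdef]
    have h1 : 0 ≤ ∑ i ∈ Finset.Icc 1 k, q ^ (-(i : ℝ) / 2) * ε i :=
      Finset.sum_nonneg fun i _ => mul_nonneg (Real.rpow_nonneg hq0.le _) (hε i)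
    have h2 : 0 ≤ Real.sqrt (2 * (F (y 0) - F ystar)) := Real.sqrt_nonneg _
    have h3 : 0 ≤ Real.sqrt (2 / μ) := Real.sqrt_nonneg _
    exact add_nonneg h2 (mul_nonneg h3 h1)
  have hind : ∀ k, Real.sqrt (Φ k) ≤ q ^ ((k : ℝ) / 2) * S k := by
    intro k
    induction k with
    | zero =>
      have h1 : Real.sqrt (Φ 0) ≤ Real.sqrt (2 * (F (y 0) - F ystar)) :=
        Real.sqrt_le_sqrt hbase
      simp only [hSdef, Nat.cast_zero, zero_div, Real.rpow_zero, one_mul]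
      rw [Finset.Icc_eq_empty (by norm_num)]
      simpa using h1
    | succ n ih =>
      have h1 := hstep n
      have h2 : Real.sqrt q * Real.sqrt (Φ n) ≤ Real.sqrt q * (q ^ ((n : ℝ) / 2) * S n) :=
        mul_le_mul_of_nonneg_left ih (Real.sqrt_nonneg q)
      have h3 : Real.sqrt q * q ^ ((n : ℝ) / 2) = q ^ (((n + 1 : ℕ) : ℝ) / 2) := by
        rw [Real.sqrt_eq_rpow, ← Real.rpow_add hq0]
        congr 1
        push_cast
        ring
      have hqq : q ^ (((n + 1 : ℕ) : ℝ) / 2) * q ^ (-((n + 1 : ℕ) : ℝ) / 2) = 1 := by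
        rw [← Real.rpow_add hq0, show (((n + 1 : ℕ) : ℝ) / 2 + -((n + 1 : ℕ) : ℝ) / 2) = 0 by ring,
          Real.rpow_zero]
      have h4 : S (n + 1) = S n + Real.sqrt (2 / μ) * (q ^ (-((n + 1 : ℕ) : ℝ) / 2) * ε (n + 1)) := by
        simp only [hSdef]
        rw [Finset.sum_Icc_succ_top (by omega : 1 ≤ n + 1)]
        ring
      calc Real.sqrt (Φ (n + 1))
          ≤ Real.sqrt q * Real.sqrt (Φ n) + Real.sqrt (2 / μ) * ε (n + 1) := h1
        _ ≤ Real.sqrt q * (q ^ ((n : ℝ) / 2) * S n) + Real.sqrt (2 / μ) * ε (n + 1) := by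
            linarith
        _ = q ^ (((n + 1 : ℕ) : ℝ) / 2) * S n + Real.sqrt (2 / μ) * ε (n + 1) := by
            linear_combination (S n) * h3
        _ = q ^ (((n + 1 : ℕ) : ℝ) / 2) * S (n + 1) := by
            rw [h4]
            linear_combination (-(Real.sqrt (2 / μ) * ε (n + 1))) * hqq
  -- conclusion
  intro k hk
  have h := hind k
  have hfy := hΦlb k
  have hSk : S k = Real.sqrt (2 * (F (y 0) - F ystar))
      + Real.sqrt (2 / μ) * ∑ i ∈ Finset.Icc 1 k, q ^ (-(i : ℝ) / 2) * ε i := by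
    simp only [hSdef]
  rw [← hSk]
  have h2 : Φ k ≤ (q ^ ((k : ℝ) / 2) * S k) ^ 2 := by
    have h3 := pow_le_pow_left₀ (Real.sqrt_nonneg (Φ k)) h 2
    rw [Real.sq_sqrt (hΦ0 k)] at h3
    exact h3
  have h3 : (q ^ ((k : ℝ) / 2) * S k) ^ 2 = q ^ k * (S k) ^ 2 := by
    rw [mul_pow]
    congr 1
    rw [← Real.rpow_natCast (q ^ ((k : ℝ) / 2)) 2, ← Real.rpow_mul hq0.le,
      show (k : ℝ) / 2 * ((2:ℕ) : ℝ) = (k : ℝ) by push_cast; ring]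
    exact Real.rpow_natCast q k
  exact le_trans hfy (le_trans h2 (le_of_eq h3))
end

section
/- Let F : ℝ^m → ℝ be convex, differentiable, and L-smooth (L > 0), attaining its global minimum at some y*. Let ε₁, ε₂, … ≥ 0 and define sequences by v⁰ = y⁰ and, for k ≥ 0: y^{k+1} = v^k − (1/L)(∇F(v^k) + e^{k+1}) with ‖e^{k+1}‖ ≤ ε_{k+1}, and v^{k+1} = y^{k+1} + (k/(k+3))(y^{k+1} − y^k). If there exist a > 0 and δ > 0 such that ε_k ≤ a·k^{−(2+δ)} for all k ≥ 1, then there exists b > 0 such that F(y^k) − F(y*) ≤ b/k² for all k ≥ 1. -/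
open scoped RealInnerProductSpace

section Aux

variable {E : Type*} [NormedAddCommGroup E] [InnerProductSpace ℝ E] [CompleteSpace E]

/-- First-order condition for convexity. -/
lemma aux_grad_lower (F : E → ℝ) (hconv : ConvexOn ℝ Set.univ F) (hdiff : Differentiable ℝ F)
    (x z : E) : F x + ⟪gradient F x, z - x⟫ ≤ F z := by
  set d := z - x with hd
  have hγ : ∀ t : ℝ, HasDerivAt (fun s : ℝ => s • d + x) d t := by
    intro t
    simpa using ((hasDerivAt_id t).smul_const d).add_const x
  have hg : ∀ t : ℝ, HasDerivAt (fun s : ℝ => F (s • d + x))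
      ⟪gradient F (t • d + x), d⟫ t := by
    intro t
    have := ((hdiff (t • d + x)).hasGradientAt.hasFDerivAt).comp_hasDerivAt t (hγ t)
    simpa [InnerProductSpace.toDual_apply_apply, Function.comp_def] using this
  have hgconv : ConvexOn ℝ Set.univ (fun s : ℝ => F (s • d + x)) := by
    have := hconv.comp_affineMap (AffineMap.lineMap x z)
    simp only [Set.preimage_univ] at this
    exact this
  have h01 : (0:ℝ) < 1 := one_pos
  have hslope := hgconv.le_slope_of_hasDerivAt (Set.mem_univ 0) (Set.mem_univ 1) h01
    (by simpa using hg 0)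
  simp only [slope_def_field] at hslope
  have h0 : (0:ℝ) • d + x = x := by simp
  have h1 : (1:ℝ) • d + x = z := by simp [hd]
  rw [h0] at hslope
  have : ⟪gradient F x, d⟫ ≤ F z - F x := by
    rw [h1] at hslope
    simpa using hslope
  linarith

/-- Descent lemma for functions with Lipschitz gradient. -/
lemma aux_descent (L : ℝ) (hL : 0 < L) (F : E → ℝ) (hdiff : Differentiable ℝ F)
    (hLip : ∀ u v : E, ‖gradient F u - gradient F v‖ ≤ L * ‖u - v‖) (x y : E) :
    F y ≤ F x + ⟪gradient F x, y - x⟫ + L / 2 * ‖y - x‖ ^ 2 := by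
  set d := y - x with hd
  set γ : ℝ → E := fun s => s • d + x with hγdef
  have hγ : ∀ t : ℝ, HasDerivAt γ d t := by
    intro t
    simpa [hγdef] using ((hasDerivAt_id t).smul_const d).add_const x
  have hg : ∀ t : ℝ, HasDerivAt (fun s : ℝ => F (γ s)) ⟪gradient F (γ t), d⟫ t := by
    intro t
    have := ((hdiff (γ t)).hasGradientAt.hasFDerivAt).comp_hasDerivAt t (hγ t)
    simpa [InnerProductSpace.toDual_apply_apply, Function.comp_def] using this
  have hgradLip : LipschitzWith (Real.toNNReal L) (gradient F) := by
    apply LipschitzWith.of_dist_le_mul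
    intro u v
    rw [dist_eq_norm, dist_eq_norm]
    calc ‖gradient F u - gradient F v‖ ≤ L * ‖u - v‖ := hLip u v
      _ ≤ Real.toNNReal L * ‖u - v‖ := by
          gcongr
          exact Real.le_coe_toNNReal L
  have hγcont : Continuous γ := by continuity
  have hcont : Continuous (fun t : ℝ => ⟪gradient F (γ t), d⟫) :=
    (Continuous.inner (hgradLip.continuous.comp hγcont) continuous_const)
  have hcont2 : Continuous (fun t : ℝ => ⟪gradient F x, d⟫ + L * t * ‖d‖ ^ 2) := by continuity
  have hftc : ∫ t in (0:ℝ)..1, ⟪gradient F (γ t), d⟫ = F (γ 1) - F (γ 0) :=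
    intervalIntegral.integral_eq_sub_of_hasDerivAt (fun t _ => hg t)
      (hcont.intervalIntegrable 0 1)
  have hmono : ∫ t in (0:ℝ)..1, ⟪gradient F (γ t), d⟫
      ≤ ∫ t in (0:ℝ)..1, (⟪gradient F x, d⟫ + L * t * ‖d‖ ^ 2) := by
    apply intervalIntegral.integral_mono_on zero_le_one
      (hcont.intervalIntegrable 0 1) (hcont2.intervalIntegrable 0 1)
    intro t ht
    have h1 : ⟪gradient F (γ t), d⟫ - ⟪gradient F x, d⟫
        = ⟪gradient F (γ t) - gradient F x, d⟫ := by
      rw [inner_sub_left]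
    have h2 : ⟪gradient F (γ t) - gradient F x, d⟫ ≤ ‖gradient F (γ t) - gradient F x‖ * ‖d‖ :=
      real_inner_le_norm _ _
    have h3 : ‖gradient F (γ t) - gradient F x‖ ≤ L * (t * ‖d‖) := by
      have := hLip (γ t) x
      simpa [hγdef, norm_smul, abs_of_nonneg ht.1] using this
    nlinarith [norm_nonneg d, ht.1, mul_le_mul_of_nonneg_right h3 (norm_nonneg d)]
  have hrhs : ∫ t in (0:ℝ)..1, (⟪gradient F x, d⟫ + L * t * ‖d‖ ^ 2)
      = ⟪gradient F x, d⟫ + L / 2 * ‖d‖ ^ 2 := by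
    have : (fun t : ℝ => ⟪gradient F x, d⟫ + L * t * ‖d‖ ^ 2)
        = fun t : ℝ => ⟪gradient F x, d⟫ + (L * ‖d‖ ^ 2) * t := by
      funext t; ring
    rw [this, intervalIntegral.integral_add (intervalIntegrable_const)
      ((intervalIntegral.intervalIntegrable_id).const_mul _),
      intervalIntegral.integral_const_mul, integral_id]
    simp
    ring
  have h0 : γ 0 = x := by simp [hγdef]
  have h1 : γ 1 = y := by simp [hγdef, hd]
  rw [h0, h1] at hftc
  linarith [hftc ▸ hmono, hrhs]

/-- The basic per-step inequality for an inexact gradient step. -/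
lemma aux_star (L : ℝ) (F : E → ℝ)
    (descent : ∀ x y : E, F y ≤ F x + ⟪gradient F x, y - x⟫ + L / 2 * ‖y - x‖ ^ 2)
    (lower : ∀ x z : E, F x + ⟪gradient F x, z - x⟫ ≤ F z)
    (v w z ee : E) (hL : 0 < L) (hw : w = v - (1 / L) • (gradient F v + ee)) :
    F w - F z ≤ L / 2 * (‖v - z‖ ^ 2 - ‖w - z‖ ^ 2) - ⟪ee, w - z⟫ := by
  set g := gradient F v with hg
  have hgeq : g = L • (v - w) - ee := by
    have h1 : (1 / L) • (g + ee) = v - w := by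
      rw [hw]; abel
    have h2 : g + ee = L • (v - w) := by
      rw [← h1, smul_smul]
      field_simp
      rw [one_smul]
    rw [← h2]; abel
  have hd := descent v w
  have hsum : F w ≤ F z + ⟪g, w - z⟫ + L / 2 * ‖w - v‖ ^ 2 := by
    have hinner : ⟪g, w - v⟫ + ⟪g, v - z⟫ = ⟪g, w - z⟫ := by
      rw [← inner_add_right]; congr 1; abel
    have hlo' : F v ≤ F z + ⟪g, v - z⟫ := by
      have := lower v z
      have hswap : ⟪g, z - v⟫ = - ⟪g, v - z⟫ := by
        rw [← inner_neg_right]; congr 1; abel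
      rw [← hg] at this
      rw [hswap] at this
      linarith
    linarith [hd, hinner]
  have hge : ⟪g, w - z⟫ = L * ⟪v - w, w - z⟫ - ⟪ee, w - z⟫ := by
    rw [hgeq, inner_sub_left, real_inner_smul_left]
  have hid : ‖v - z‖ ^ 2 = ‖v - w‖ ^ 2 + 2 * ⟪v - w, w - z⟫ + ‖w - z‖ ^ 2 := by
    have : v - z = (v - w) + (w - z) := by abel
    rw [this, @norm_add_sq_real]
  have hnorm : ‖w - v‖ = ‖v - w‖ := norm_sub_rev _ _
  rw [hge] at hsum
  rw [hnorm] at hsum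
  nlinarith [hsum, hid]

/-- Quadratic telescoping identity. -/
lemma aux_quad_id (t : ℝ) (V W Y S : E) :
    t * (t - 1) * (‖V - Y‖ ^ 2 - ‖W - Y‖ ^ 2) + t * (‖V - S‖ ^ 2 - ‖W - S‖ ^ 2)
      = ‖t • V - (t - 1) • Y - S‖ ^ 2 - ‖t • W - (t - 1) • Y - S‖ ^ 2 := by
  simp only [← real_inner_self_eq_norm_sq, inner_sub_left, inner_sub_right,
    real_inner_smul_left, real_inner_smul_right]
  ring_nf

end Aux

lemma aux_sqrt_rec {x A c : ℝ} (hx : 0 ≤ x) (hA : 0 ≤ A) (hc : 0 ≤ c)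
    (h : x ≤ A + c * Real.sqrt x) : Real.sqrt x ≤ Real.sqrt A + c := by
  by_contra hlt
  push_neg at hlt
  have h1 : Real.sqrt x * Real.sqrt x = x := Real.mul_self_sqrt hx
  have h2 : Real.sqrt A * Real.sqrt A = A := Real.mul_self_sqrt hA
  nlinarith [Real.sqrt_nonneg x, Real.sqrt_nonneg A]

/-- Uniform bound on the weighted error sums. -/
lemma aux_sum_bound (a δ : ℝ) (ha : 0 < a) (hδ : 0 < δ) (ε : ℕ → ℝ) (hε : ∀ k, 0 ≤ ε k)
    (hεdecay : ∀ k : ℕ, 1 ≤ k → ε k ≤ a * (k : ℝ) ^ (-(2 + δ))) :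
    ∃ C : ℝ, 0 ≤ C ∧ ∀ k : ℕ, ∑ i ∈ Finset.range k, (((i:ℝ) + 2)/2 * ε (i+1)) ≤ C := by
  set f : ℕ → ℝ := fun n => (n : ℝ) ^ (-(1 + δ)) with hf
  have hfnn : ∀ n, 0 ≤ f n := fun n => Real.rpow_nonneg (Nat.cast_nonneg n) _
  have hsum : Summable f := Real.summable_nat_rpow.mpr (by linarith)
  have htsumnn : 0 ≤ ∑' n, f n := tsum_nonneg hfnn
  refine ⟨a * ∑' n, f n, by positivity, fun k => ?_⟩
  have hterm : ∀ i : ℕ, ((i:ℝ) + 2)/2 * ε (i+1) ≤ a * f (i+1) := by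
    intro i
    have hipos : (0:ℝ) < (i:ℝ) + 1 := by positivity
    have h1 : ((i:ℝ) + 2)/2 ≤ (i:ℝ) + 1 := by linarith
    have h2 : ε (i+1) ≤ a * ((i:ℝ) + 1) ^ (-(2 + δ)) := by
      have := hεdecay (i+1) (Nat.le_add_left 1 i)
      push_cast at this
      linarith
    have h3 : ((i:ℝ) + 2)/2 * ε (i+1) ≤ ((i:ℝ) + 1) * (a * ((i:ℝ) + 1) ^ (-(2 + δ))) := by
      apply mul_le_mul h1 h2 (hε _) (by positivity)
    have h4 : ((i:ℝ) + 1) * (a * ((i:ℝ) + 1) ^ (-(2 + δ))) = a * f (i+1) := by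
      rw [hf]
      push_cast
      rw [show -(1 + δ) = 1 + -(2 + δ) by ring, Real.rpow_add hipos, Real.rpow_one]
      ring
    linarith
  calc ∑ i ∈ Finset.range k, (((i:ℝ) + 2)/2 * ε (i+1))
      ≤ ∑ i ∈ Finset.range k, a * f (i+1) := Finset.sum_le_sum (fun i _ => hterm i)
    _ = a * ∑ i ∈ Finset.range k, f (i+1) := by rw [Finset.mul_sum]
    _ ≤ a * ∑' n, f n := by
        gcongr
        have h0 : f 0 = 0 := by
          rw [hf]; simp only [Nat.cast_zero]
          exact Real.zero_rpow (by linarith)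
        have : ∑ i ∈ Finset.range k, f (i+1) = ∑ i ∈ Finset.range (k+1), f i := by
          rw [Finset.sum_range_succ', h0, add_zero]
        rw [this]
        exact Summable.sum_le_tsum _ (fun i _ => hfnn i) hsum

set_option maxHeartbeats 1000000 in
/-- Inexact accelerated gradient descent for a convex `L`-smooth `F` attaining its
minimum at `y*`, with momentum `β_k = k/(k+3)`: if the gradient errors satisfy
`ε_k ≤ a k^{−(2+δ)}` for some `a, δ > 0`, then `F(y^k) − F(y*) ≤ b / k²` for some
`b > 0` and all `k ≥ 1`. -/
theorem stmt10 {m : ℕ} (L : ℝ) (hL : 0 < L)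
    (F : EuclideanSpace ℝ (Fin m) → ℝ)
    (hFconv : ConvexOn ℝ Set.univ F)
    (hFdiff : Differentiable ℝ F)
    (hFsmooth : ∀ u v : EuclideanSpace ℝ (Fin m),
      ‖gradient F u - gradient F v‖ ≤ L * ‖u - v‖)
    (ystar : EuclideanSpace ℝ (Fin m)) (hystar : ∀ z, F ystar ≤ F z)
    (ε : ℕ → ℝ) (hε : ∀ k, 0 ≤ ε k)
    (y v : ℕ → EuclideanSpace ℝ (Fin m))
    (e : ℕ → EuclideanSpace ℝ (Fin m))
    (hv0 : v 0 = y 0)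
    (heε : ∀ k, ‖e (k + 1)‖ ≤ ε (k + 1))
    (hyk : ∀ k, y (k + 1) = v k - (1 / L) • (gradient F (v k) + e (k + 1)))
    (hvk : ∀ k : ℕ, v (k + 1) = y (k + 1) + ((k : ℝ) / (k + 3)) • (y (k + 1) - y k))
    (a δ : ℝ) (ha : 0 < a) (hδ : 0 < δ)
    (hεdecay : ∀ k : ℕ, 1 ≤ k → ε k ≤ a * (k : ℝ) ^ (-(2 + δ))) :
    ∃ b > 0, ∀ k : ℕ, 1 ≤ k → F (y k) - F ystar ≤ b / (k : ℝ) ^ 2 := by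
  have descent := aux_descent L hL F hFdiff hFsmooth
  have lower := aux_grad_lower F hFconv hFdiff
  have star := fun (vv w z ee : EuclideanSpace ℝ (Fin m)) hw =>
    aux_star L F descent lower vv w z ee hL hw
  set t : ℕ → ℝ := fun k => ((k:ℝ) + 2)/2 with htdef
  set u : ℕ → EuclideanSpace ℝ (Fin m) :=
    fun k => t k • v k - (t k - 1) • y k - ystar with hudef
  set D : ℕ → ℝ := fun k => F (y k) - F ystar with hDdef
  clear_value t u D
  have hDnn : ∀ k, 0 ≤ D k := by
    intro k
    simp only [hDdef, sub_nonneg]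
    exact hystar (y k)
  have htpos : ∀ k, 0 < t k := by
    intro k
    simp only [htdef]
    positivity
  have ht1 : ∀ k, 0 ≤ t k - 1 := by
    intro k
    simp only [htdef]
    have : (0:ℝ) ≤ (k:ℝ) := Nat.cast_nonneg k
    linarith
  -- shift identity for u
  have hushift : ∀ k, u (k+1) = t k • y (k+1) - (t k - 1) • y k - ystar := by
    intro k
    have hk3 : ((k:ℝ) + 3) ≠ 0 := by positivity
    simp only [hudef, htdef]
    rw [hvk k]
    push_cast
    match_scalars <;> field_simp <;> ring
  -- main per-step inequality
  have hstep : ∀ k : ℕ, t k ^ 2 * D (k+1) + L/2 * ‖u (k+1)‖^2 ≤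
      t k * (t k - 1) * D k + L/2 * ‖u k‖^2 + t k * (ε (k+1) * ‖u (k+1)‖) := by
    intro k
    have s1 := star (v k) (y (k+1)) (y k) (e (k+1)) (hyk k)
    have s2 := star (v k) (y (k+1)) ystar (e (k+1)) (hyk k)
    have hD1 : F (y (k+1)) - F (y k) = D (k+1) - D k := by
      simp only [hDdef]; ring
    have hD2 : F (y (k+1)) - F ystar = D (k+1) := by
      simp only [hDdef]
    rw [hD1] at s1
    rw [hD2] at s2
    have m1 := mul_le_mul_of_nonneg_left s1 (mul_nonneg (htpos k).le (ht1 k))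
    have m2 := mul_le_mul_of_nonneg_left s2 (htpos k).le
    have e1 : t k • v k - (t k - 1) • y k - ystar = u k := by
      simp only [hudef]
    have e2 : t k • y (k+1) - (t k - 1) • y k - ystar = u (k+1) := (hushift k).symm
    have q : L/2 * (t k * (t k - 1) * (‖v k - y k‖^2 - ‖y (k+1) - y k‖^2)
          + t k * (‖v k - ystar‖^2 - ‖y (k+1) - ystar‖^2))
        = L/2 * (‖u k‖^2 - ‖u (k+1)‖^2) := by
      rw [aux_quad_id (t k) (v k) (y (k+1)) (y k) ystar, e1, e2]
    have ie : t k * (t k - 1) * ⟪e (k+1), y (k+1) - y k⟫ + t k * ⟪e (k+1), y (k+1) - ystar⟫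
        = t k * ⟪e (k+1), u (k+1)⟫ := by
      rw [← e2]
      simp only [inner_sub_right, real_inner_smul_right]
      ring
    have hca : -⟪e (k+1), u (k+1)⟫ ≤ ε (k+1) * ‖u (k+1)‖ := by
      have h1 : |⟪e (k+1), u (k+1)⟫| ≤ ‖e (k+1)‖ * ‖u (k+1)‖ := abs_real_inner_le_norm _ _
      have h2 : ‖e (k+1)‖ * ‖u (k+1)‖ ≤ ε (k+1) * ‖u (k+1)‖ :=
        mul_le_mul_of_nonneg_right (heε k) (norm_nonneg _)
      calc -⟪e (k+1), u (k+1)⟫ ≤ |⟪e (k+1), u (k+1)⟫| := neg_le_abs _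
        _ ≤ ‖e (k+1)‖ * ‖u (k+1)‖ := h1
        _ ≤ ε (k+1) * ‖u (k+1)‖ := h2
    have m3 := mul_le_mul_of_nonneg_left hca (htpos k).le
    nlinarith [m1, m2, q, ie, m3]
  -- coefficient comparison
  have ht2 : ∀ k : ℕ, t k * (t k - 1) ≤ (t (k-1))^2 := by
    intro k
    cases k with
    | zero => norm_num [htdef]
    | succ n =>
      simp only [htdef, Nat.add_sub_cancel]
      push_cast
      nlinarith [sq_nonneg ((n:ℝ))]
  -- energy
  set Ee : ℕ → ℝ := fun k => (t (k-1))^2 * D k + L/2 * ‖u k‖^2 with hEedef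
  clear_value Ee
  have hEnn : ∀ k, 0 ≤ Ee k := by
    intro k
    simp only [hEedef]
    have h1 := mul_nonneg (sq_nonneg (t (k-1))) (hDnn k)
    have h2 : (0:ℝ) ≤ L/2 * ‖u k‖^2 := by positivity
    exact add_nonneg h1 h2
  have hEsucc : ∀ k : ℕ, Ee (k+1) = (t k)^2 * D (k+1) + L/2 * ‖u (k+1)‖^2 := by
    intro k
    simp only [hEedef, Nat.add_sub_cancel]
  have hstep' : ∀ k : ℕ, Ee (k+1) ≤ Ee k
      + (t k * ε (k+1) * Real.sqrt (2/L)) * Real.sqrt (Ee (k+1)) := by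
    intro k
    have h1 := hstep k
    have h2 : t k * (t k - 1) * D k ≤ (t (k-1))^2 * D k :=
      mul_le_mul_of_nonneg_right (ht2 k) (hDnn k)
    have h3 : ‖u (k+1)‖ ≤ Real.sqrt (2/L) * Real.sqrt (Ee (k+1)) := by
      have hx : ‖u (k+1)‖^2 ≤ 2/L * Ee (k+1) := by
        rw [hEsucc k]
        have hd := hDnn (k+1)
        have ht := sq_nonneg (t k)
        have hLi : 2/L * (L/2) = 1 := by field_simp
        nlinarith [mul_nonneg (mul_nonneg (le_of_lt (by positivity : (0:ℝ) < 2/L)) ht) hd]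
      calc ‖u (k+1)‖ = Real.sqrt (‖u (k+1)‖^2) := (Real.sqrt_sq (norm_nonneg _)).symm
        _ ≤ Real.sqrt (2/L * Ee (k+1)) := Real.sqrt_le_sqrt hx
        _ = Real.sqrt (2/L) * Real.sqrt (Ee (k+1)) := Real.sqrt_mul (by positivity) _
    have h4 : t k * (ε (k+1) * ‖u (k+1)‖)
        ≤ (t k * ε (k+1) * Real.sqrt (2/L)) * Real.sqrt (Ee (k+1)) := by
      have := mul_le_mul_of_nonneg_left h3 (mul_nonneg (htpos k).le (hε (k+1)))
      calc t k * (ε (k+1) * ‖u (k+1)‖) = (t k * ε (k+1)) * ‖u (k+1)‖ := by ring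
        _ ≤ (t k * ε (k+1)) * (Real.sqrt (2/L) * Real.sqrt (Ee (k+1))) := this
        _ = (t k * ε (k+1) * Real.sqrt (2/L)) * Real.sqrt (Ee (k+1)) := by ring
    have hEk : Ee k = t (k-1)^2 * D k + L/2 * ‖u k‖^2 := by simp only [hEedef]
    generalize Real.sqrt (Ee (k+1)) = s at h4 ⊢
    rw [hEsucc k, hEk]
    generalize ‖u (k+1)‖ = N1 at h1 h4 ⊢
    generalize ‖u k‖ = N0 at h1 ⊢
    generalize D (k+1) = D1 at h1 ⊢
    generalize D k = D0 at h1 h2 ⊢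
    linarith [h1, h2, h4]
  -- sqrt recursion
  have hc_nn : ∀ k : ℕ, 0 ≤ t k * ε (k+1) * Real.sqrt (2/L) := by
    intro k
    exact mul_nonneg (mul_nonneg (htpos k).le (hε (k+1))) (Real.sqrt_nonneg _)
  have hsqrt_step : ∀ k : ℕ, Real.sqrt (Ee (k+1))
      ≤ Real.sqrt (Ee k) + t k * ε (k+1) * Real.sqrt (2/L) :=
    fun k => aux_sqrt_rec (hEnn (k+1)) (hEnn k) (hc_nn k) (hstep' k)
  have hsqsum : ∀ k : ℕ, Real.sqrt (Ee k) ≤ Real.sqrt (Ee 0)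
      + ∑ i ∈ Finset.range k, (t i * ε (i+1) * Real.sqrt (2/L)) := by
    intro k
    induction k with
    | zero => simp
    | succ n ih =>
      rw [Finset.sum_range_succ]
      have := hsqrt_step n
      linarith
  obtain ⟨C, hCnn, hC⟩ := aux_sum_bound a δ ha hδ ε hε hεdecay
  have hsumbd : ∀ k : ℕ, ∑ i ∈ Finset.range k, (t i * ε (i+1) * Real.sqrt (2/L))
      ≤ C * Real.sqrt (2/L) := by
    intro k
    have : ∑ i ∈ Finset.range k, (t i * ε (i+1) * Real.sqrt (2/L))
        = (∑ i ∈ Finset.range k, (((i:ℝ) + 2)/2 * ε (i+1))) * Real.sqrt (2/L) := by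
      rw [Finset.sum_mul]
      apply Finset.sum_congr rfl
      intro i _
      simp only [htdef]
    rw [this]
    exact mul_le_mul_of_nonneg_right (hC k) (Real.sqrt_nonneg _)
  set B0 : ℝ := Real.sqrt (Ee 0) + C * Real.sqrt (2/L) with hB0def
  clear_value B0
  have hB0nn : 0 ≤ B0 := by
    have := Real.sqrt_nonneg (Ee 0)
    have h2 : 0 ≤ C * Real.sqrt (2/L) := mul_nonneg hCnn (Real.sqrt_nonneg _)
    simp only [hB0def]
    linarith
  have hEb : ∀ k, Ee k ≤ B0^2 := by
    intro k
    have h1 : Real.sqrt (Ee k) ≤ B0 := le_trans (hsqsum k) (by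
      have := hsumbd k
      simp only [hB0def]
      linarith)
    have h2 : Ee k = Real.sqrt (Ee k) ^ 2 := (Real.sq_sqrt (hEnn k)).symm
    rw [h2]
    exact pow_le_pow_left₀ (Real.sqrt_nonneg _) h1 2
  refine ⟨4 * B0^2 + 1, by positivity, ?_⟩
  intro k hk
  obtain ⟨n, rfl⟩ := Nat.exists_eq_add_of_le hk
  set k := 1 + n with hkdef
  have hkcast : ((k:ℝ)) = (n:ℝ) + 1 := by
    simp only [hkdef]; push_cast; ring
  have hkpos : (0:ℝ) < (k:ℝ) := by rw [hkcast]; positivity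
  have htk : t (k-1) = ((n:ℝ) + 2)/2 := by
    have : k - 1 = n := by simp [hkdef]
    rw [this]
    simp only [htdef]
  have hEk : (t (k-1))^2 * D k ≤ B0^2 := by
    have h1 := hEb k
    have h2 : (0:ℝ) ≤ L/2 * ‖u k‖^2 := by positivity
    simp only [hEedef] at h1
    linarith
  have hhalf : (k:ℝ)/2 ≤ t (k-1) := by
    rw [htk, hkcast]
    linarith
  have hD : D k * ((k:ℝ)/2)^2 ≤ B0^2 := by
    have h1 : ((k:ℝ)/2)^2 ≤ (t (k-1))^2 := by
      apply pow_le_pow_left₀ (by positivity) hhalf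
    have := mul_le_mul_of_nonneg_left h1 (hDnn k)
    nlinarith [hEk]
  have hgoal : D k ≤ (4 * B0^2 + 1) / (k:ℝ)^2 := by
    rw [le_div_iff₀ (by positivity : (0:ℝ) < (k:ℝ)^2)]
    nlinarith [hD, hDnn k]
  simpa only [hDdef] using hgoal
end

section
/- Let V ⊆ ℝ^m be a linear subspace and let F : ℝ^m → ℝ be convex, differentiable, and L-smooth, with F μ-strongly convex on V for some 0 < μ < L; suppose ∇F(v) ∈ V for every v ∈ V and F attains its global minimum at some y* ∈ V. Set κ = L/μ and β = (√κ − 1)/(√κ + 1). Let ε₁ ≥ 0, θ ∈ (0,1), and ε_k² = ε₁² θ^{k−1} for k ≥ 1. Define y⁰ = v⁰ = 0 and, for k ≥ 0: y^{k+1} = v^k − (1/L)(∇F(v^k) + e^{k+1}) where e^{k+1} ∈ V and ‖e^{k+1}‖ ≤ ε_{k+1}, and v^{k+1} = y^{k+1} + β(y^{k+1} − y^k). Then: (i) if θ ≠ 1 − 1/√κ, there exists M > 0 such that F(y^k) − F(y*) ≤ M · max(1 − 1/√κ, θ)^k for all k ≥ 1; (ii) if θ = 1 − 1/√κ, there exists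 M > 0 such that F(y^k) − F(y*) ≤ M · k² (1 − 1/√κ)^k for all k ≥ 1. -/
open scoped RealInnerProductSpace Topology
open Filter Set

set_option maxHeartbeats 2000000

section helpers

variable {m : ℕ}
local notation "E" => EuclideanSpace ℝ (Fin m)

lemma stmt11_lineDeriv (F : E → ℝ) (hF : Differentiable ℝ F) (u w : E) (t₀ : ℝ) :
    HasDerivAt (fun t : ℝ => F (u + t • w)) ⟪gradient F (u + t₀ • w), w⟫ t₀ := by
  have hc : HasDerivAt (fun t : ℝ => u + t • w) w t₀ := by
    simpa using ((hasDerivAt_id t₀).smul_const w).const_add u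
  have hg := (hF (u + t₀ • w)).hasGradientAt
  have := hg.hasFDerivAt.comp_hasDerivAt t₀ hc
  simpa [InnerProductSpace.toDual, Function.comp_def] using this

lemma stmt11_firstOrderSC (F : E → ℝ) (hF : Differentiable ℝ F) (μ : ℝ) (u v : E)
    (h : ∀ t : ℝ, 0 ≤ t → t ≤ 1 →
      F (t • v + (1 - t) • u) ≤ t * F v + (1 - t) * F u - μ / 2 * (t * (1 - t) * ‖v - u‖ ^ 2)) :
    F u + ⟪gradient F u, v - u⟫ + μ / 2 * ‖v - u‖ ^ 2 ≤ F v := by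
  have hd : HasDerivAt (fun t : ℝ => F (u + t • (v - u))) ⟪gradient F u, v - u⟫ 0 := by
    simpa using stmt11_lineDeriv F hF u (v - u) 0
  have hslope : Tendsto (fun t : ℝ => (F (u + t • (v - u)) - F u) / t) (𝓝[>] 0)
      (𝓝 ⟪gradient F u, v - u⟫) := by
    have := hasDerivAt_iff_tendsto_slope.mp hd
    have h2 := this.mono_left (nhdsWithin_mono 0 (fun x hx => ne_of_gt hx : Ioi (0:ℝ) ⊆ {0}ᶜ))
    simpa [slope_fun_def, sub_zero, div_eq_inv_mul] using h2
  have hrhs : Tendsto (fun t : ℝ => F v - F u - μ / 2 * ((1 - t) * ‖v - u‖ ^ 2)) (𝓝[>] 0)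
      (𝓝 (F v - F u - μ / 2 * ‖v - u‖ ^ 2)) := by
    have : ContinuousAt (fun t : ℝ => F v - F u - μ / 2 * ((1 - t) * ‖v - u‖ ^ 2)) 0 := by
      fun_prop
    simpa using this.continuousWithinAt.tendsto
  have hle : ⟪gradient F u, v - u⟫ ≤ F v - F u - μ / 2 * ‖v - u‖ ^ 2 := by
    refine le_of_tendsto_of_tendsto hslope hrhs ?_
    filter_upwards [Ioo_mem_nhdsGT_of_mem (by constructor <;> norm_num : (0:ℝ) ∈ Ico (0:ℝ) 1)]
      with t ht
    have hveq : u + t • (v - u) = t • v + (1 - t) • u := by module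
    have := h t ht.1.le ht.2.le
    rw [hveq, div_le_iff₀ ht.1]
    nlinarith [this]
  linarith

lemma stmt11_descent (F : E → ℝ) (hF : Differentiable ℝ F) (L : ℝ) (hL : 0 < L)
    (hsm : ∀ u v : E, ‖gradient F u - gradient F v‖ ≤ L * ‖u - v‖) (a b : E) :
    F b ≤ F a + ⟪gradient F a, b - a⟫ + L / 2 * ‖b - a‖ ^ 2 := by
  set w := b - a with hw
  set h : ℝ → ℝ := fun t => F (a + t • w) - t * ⟪gradient F a, w⟫ - L / 2 * t ^ 2 * ‖w‖ ^ 2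
    with hh
  have hd : ∀ t : ℝ, HasDerivAt h
      (⟪gradient F (a + t • w), w⟫ - ⟪gradient F a, w⟫ - L * t * ‖w‖ ^ 2) t := by
    intro t
    have h1 := stmt11_lineDeriv F hF a w t
    have h2 : HasDerivAt (fun t : ℝ => t * ⟪gradient F a, w⟫) ⟪gradient F a, w⟫ t := by
      simpa using (hasDerivAt_id t).mul_const ⟪gradient F a, w⟫
    have h3 : HasDerivAt (fun t : ℝ => L / 2 * t ^ 2 * ‖w‖ ^ 2) (L * t * ‖w‖ ^ 2) t := by
      have := ((hasDerivAt_pow 2 t).const_mul (L / 2)).mul_const (‖w‖ ^ 2)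
      exact this.congr_deriv (by rw [show (2:ℕ) - 1 = 1 from rfl]; push_cast; ring)
    exact (h1.sub h2).sub h3
  have hanti : AntitoneOn h (Icc 0 1) := by
    apply antitoneOn_of_deriv_nonpos (convex_Icc 0 1)
    · exact Continuous.continuousOn (by
        have : Continuous h := by
          apply Continuous.sub
          apply Continuous.sub
          · exact hF.continuous.comp (by continuity)
          · continuity
          · continuity
        exact this)
    · intro t ht
      exact ((hd t).differentiableAt).differentiableWithinAt
    · intro t ht
      rw [interior_Icc] at ht
      rw [(hd t).deriv]
      have hb : ⟪gradient F (a + t • w) - gradient F a, w⟫ ≤ L * t * ‖w‖ ^ 2 := by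
        calc ⟪gradient F (a + t • w) - gradient F a, w⟫
            ≤ ‖gradient F (a + t • w) - gradient F a‖ * ‖w‖ := real_inner_le_norm _ _
          _ ≤ (L * ‖(a + t • w) - a‖) * ‖w‖ := by
              apply mul_le_mul_of_nonneg_right (hsm _ _) (norm_nonneg _)
          _ = L * t * ‖w‖ ^ 2 := by
              have : ‖(a + t • w) - a‖ = t * ‖w‖ := by
                simp [norm_smul, abs_of_pos ht.1]
              rw [this]; ring
      have := inner_sub_left (𝕜 := ℝ) (gradient F (a + t • w)) (gradient F a) w
      rw [this] at hb
      linarith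
  have h10 := hanti (by norm_num : (0:ℝ) ∈ Icc (0:ℝ) 1) (by norm_num : (1:ℝ) ∈ Icc (0:ℝ) 1)
    (by norm_num)
  simp only [hh] at h10
  have : a + (1:ℝ) • w = b := by module
  rw [this] at h10
  simp only [one_mul, one_pow, mul_one, zero_smul, add_zero, zero_mul, mul_zero, sub_zero,
    ne_eq, OfNat.ofNat_ne_zero, not_false_eq_true, zero_pow] at h10
  linarith

end helpers

section keystep

variable {E' : Type*} [NormedAddCommGroup E'] [InnerProductSpace ℝ E']

lemma stmt11_keyStep (μ L s : ℝ) (hμ : 0 < μ) (hL : 0 < L) (hs1 : 1 < s) (hss : s ^ 2 = L / μ)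
    (x yk y1 z z1 ystar g ee : E') (A B C D : ℝ)
    (hy1 : y1 = x - (1 / L) • (g + ee))
    (hz : z = (s + 1) • x - s • yk)
    (hz1 : z1 = s • y1 - (s - 1) • yk)
    (hdesc : A ≤ B + ⟪g, y1 - x⟫ + L / 2 * ‖y1 - x‖ ^ 2)
    (hsc2 : B + ⟪g, ystar - x⟫ + μ / 2 * ‖ystar - x‖ ^ 2 ≤ D)
    (hsc3 : B + ⟪g, yk - x⟫ ≤ C) :
    A - D + μ / 2 * ‖z1 - ystar‖ ^ 2 ≤
      (1 - 1 / s) * (C - D + μ / 2 * ‖z - ystar‖ ^ 2) +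
      ‖ee‖ * (‖y1 - ystar‖ + (1 - 1 / s) * ‖yk - ystar‖) := by
  have hs0 : 0 < s := lt_trans one_pos hs1
  set q : ℝ := 1 / s with hqdef
  have hq0 : 0 < q := by positivity
  have hq1 : q < 1 := by rw [hqdef]; rw [div_lt_one hs0]; exact hs1
  set gh : E' := g + ee with hgh
  set u0 : E' := z - ystar with hu0
  set p : E' := x - ystar with hp
  set w : E' := (1 - q) • u0 + q • p with hwdef
  have hz1y : z1 - ystar = w - (s / L) • gh := by
    rw [hz1, hy1, hwdef, hu0, hp, hz, hqdef, hgh]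
    match_scalars <;> field_simp <;> ring
  have hqw : q • w = q • p + (1 - q) • (x - yk) := by
    rw [hwdef, hu0, hp, hz, hqdef]
    match_scalars <;> field_simp <;> ring
  have herrv : (1 / L) • gh - q • w = q • (ystar - y1) + (1 - q) • (yk - y1) := by
    rw [hqw, hy1, hp]
    match_scalars <;> field_simp <;> ring
  have hmsL : μ * s ^ 2 = L := by rw [hss]; field_simp
  have hf9 : μ * (s / L) = q := by
    rw [hqdef]
    field_simp
    linear_combination hmsL
  have hf10 : μ * (s / L) ^ 2 = 1 / L := by
    field_simp
    linear_combination hmsL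
  have hd2 : A ≤ B - (1 / L) * ⟪g, gh⟫ + 1 / L / 2 * ‖gh‖ ^ 2 := by
    have h1 : y1 - x = -((1 / L) • gh) := by rw [hy1, hgh]; abel
    rw [h1] at hdesc
    rw [inner_neg_right, real_inner_smul_right, norm_neg, norm_smul] at hdesc
    have : ‖(1 : ℝ) / L‖ = 1 / L := by
      rw [Real.norm_eq_abs, abs_of_pos (by positivity)]
    rw [this] at hdesc
    calc A ≤ B + -(1 / L * ⟪g, gh⟫) + L / 2 * (1 / L * ‖gh‖) ^ 2 := hdesc
      _ = B - (1 / L) * ⟪g, gh⟫ + 1 / L / 2 * ‖gh‖ ^ 2 := by field_simp; ring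
  have hf4 : ‖z1 - ystar‖ ^ 2 = ‖w‖ ^ 2 - 2 * (s / L) * ⟪w, gh⟫ + (s / L) ^ 2 * ‖gh‖ ^ 2 := by
    rw [hz1y, norm_sub_sq_real, real_inner_smul_right, norm_smul]
    have : ‖s / L‖ = s / L := by rw [Real.norm_eq_abs, abs_of_pos (by positivity)]
    rw [this]
    ring
  have hf5 : ‖w‖ ^ 2 ≤ (1 - q) * ‖u0‖ ^ 2 + q * ‖p‖ ^ 2 := by
    rw [hwdef, norm_add_sq_real, real_inner_smul_left, real_inner_smul_right, norm_smul,
      norm_smul]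
    have h1 : ‖(1 - q)‖ = 1 - q := by rw [Real.norm_eq_abs, abs_of_pos (by linarith)]
    have h2 : ‖q‖ = q := by rw [Real.norm_eq_abs, abs_of_pos hq0]
    rw [h1, h2]
    have h3 : ⟪u0, p⟫ ≤ ‖u0‖ * ‖p‖ := real_inner_le_norm _ _
    nlinarith [sq_nonneg (‖u0‖ - ‖p‖), mul_pos hq0 (by linarith : (0:ℝ) < 1 - q),
      norm_nonneg u0, norm_nonneg p]
  have hwg : ⟪w, gh⟫ = ⟪w, g⟫ + ⟪w, ee⟫ := by rw [hgh, inner_add_right]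
  have hf6 : q * ⟪w, g⟫ = q * ⟪g, p⟫ + (1 - q) * ⟪g, yk - x⟫ * (-1) := by
    have h1 : ⟪q • w, g⟫ = q * ⟪w, g⟫ := real_inner_smul_left _ _ _
    rw [hqw] at h1
    rw [inner_add_left, real_inner_smul_left, real_inner_smul_left] at h1
    have h2 : ⟪p, g⟫ = ⟪g, p⟫ := real_inner_comm _ _
    have h3 : ⟪x - yk, g⟫ = -⟪g, yk - x⟫ := by
      rw [real_inner_comm, ← inner_neg_right]
      congr 1
      abel
    rw [h2, h3] at h1
    linarith [h1]
  have hf8 : (1 / L) * ⟪ee, gh⟫ - q * ⟪w, ee⟫ ≤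
      ‖ee‖ * (‖y1 - ystar‖ + (1 - q) * ‖yk - ystar‖) := by
    have h1 : (1 / L) * ⟪ee, gh⟫ - q * ⟪w, ee⟫ = ⟪ee, (1 / L) • gh - q • w⟫ := by
      rw [inner_sub_right, real_inner_smul_right, real_inner_smul_right]
      rw [real_inner_comm w ee]
    rw [h1, herrv, inner_add_right, real_inner_smul_right, real_inner_smul_right]
    have h2 : ⟪ee, ystar - y1⟫ ≤ ‖ee‖ * ‖y1 - ystar‖ := by
      calc ⟪ee, ystar - y1⟫ ≤ ‖ee‖ * ‖ystar - y1‖ := real_inner_le_norm _ _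
        _ = ‖ee‖ * ‖y1 - ystar‖ := by rw [norm_sub_rev]
    have h3 : ⟪ee, yk - y1⟫ ≤ ‖ee‖ * (‖yk - ystar‖ + ‖y1 - ystar‖) := by
      calc ⟪ee, yk - y1⟫ ≤ ‖ee‖ * ‖yk - y1‖ := real_inner_le_norm _ _
        _ ≤ ‖ee‖ * (‖yk - ystar‖ + ‖y1 - ystar‖) := by
            apply mul_le_mul_of_nonneg_left _ (norm_nonneg _)
            calc ‖yk - y1‖ = ‖(yk - ystar) + (ystar - y1)‖ := by congr 1; abel
              _ ≤ ‖yk - ystar‖ + ‖ystar - y1‖ := norm_add_le _ _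
              _ = ‖yk - ystar‖ + ‖y1 - ystar‖ := by rw [norm_sub_rev ystar y1]
    nlinarith [norm_nonneg ee, norm_nonneg (y1 - ystar), norm_nonneg (yk - ystar),
      mul_le_mul_of_nonneg_left h2 hq0.le,
      mul_le_mul_of_nonneg_left h3 (by linarith : (0:ℝ) ≤ 1 - q)]
  have hgsplit : ⟪g, gh⟫ = ‖gh‖ ^ 2 - ⟪ee, gh⟫ := by
    have : ⟪gh, gh⟫ = ⟪g, gh⟫ + ⟪ee, gh⟫ := by rw [hgh, inner_add_left]
    rw [real_inner_self_eq_norm_sq] at this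
    linarith
  have hgsplitL : (1 / L) * ⟪g, gh⟫ = (1 / L) * ‖gh‖ ^ 2 - (1 / L) * ⟪ee, gh⟫ := by
    rw [hgsplit]; ring
  have hwgq : q * ⟪w, gh⟫ = q * ⟪w, g⟫ + q * ⟪w, ee⟫ := by rw [hwg]; ring
  have hstar : ⟪g, ystar - x⟫ = -⟪g, p⟫ := by
    rw [hp, ← inner_neg_right]
    congr 1
    abel
  have hnstar : ‖ystar - x‖ = ‖p‖ := by rw [hp, norm_sub_rev]
  rw [hstar, hnstar] at hsc2
  have hm5 : μ / 2 * ‖w‖ ^ 2 ≤ μ / 2 * ((1 - q) * ‖u0‖ ^ 2 + q * ‖p‖ ^ 2) :=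
    mul_le_mul_of_nonneg_left hf5 (by positivity)
  have hq2 : q * (B + -⟪g, p⟫ + μ / 2 * ‖p‖ ^ 2) ≤ q * D := mul_le_mul_of_nonneg_left hsc2 hq0.le
  have hq3 : (1 - q) * (B + ⟪g, yk - x⟫) ≤ (1 - q) * C :=
    mul_le_mul_of_nonneg_left hsc3 (by linarith)
  have hexp : μ / 2 * ‖z1 - ystar‖ ^ 2 =
      μ / 2 * ‖w‖ ^ 2 - q * ⟪w, gh⟫ + 1 / L / 2 * ‖gh‖ ^ 2 := by
    rw [hf4]
    linear_combination (-(⟪w, gh⟫ : ℝ)) * hf9 + (‖gh‖ ^ 2 / 2) * hf10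
  linarith [hd2, hm5, hq2, hq3, hexp, hf8, hgsplitL, hwgq, hf6]

end keystep

lemma stmt11_quadRec (a0 a1 ε c ρ K : ℝ) (hρ0 : 0 < ρ) (hρ1 : ρ ≤ 1) (hc : 0 ≤ c)
    (hε : 0 ≤ ε) (ha0 : 0 ≤ a0) (ha1 : 0 ≤ a1) (hK : K = c * (1 + 1 / ρ) / 2)
    (h : a1 ^ 2 ≤ ρ ^ 2 * a0 ^ 2 + c * ε * (a1 + a0)) : a1 ≤ ρ * a0 + K * ε := by
  have h1ρ : 1 ≤ 1 / ρ := by rw [le_div_iff₀ hρ0]; linarith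
  have hKc : c ≤ K := by rw [hK]; nlinarith
  have hK0 : 0 ≤ K := le_trans hc hKc
  have hKρ : 2 * ρ * K = c * (ρ + 1) := by rw [hK]; field_simp
  by_contra hcon
  push_neg at hcon
  have h2 : 0 < a1 + ρ * a0 + K * ε - c * ε := by
    nlinarith [mul_nonneg (sub_nonneg.2 hKc) hε, mul_nonneg hρ0.le ha0, mul_nonneg hK0 hε]
  have h3 : 0 < (a1 - (ρ * a0 + K * ε)) * (a1 + ρ * a0 + K * ε - c * ε) :=
    mul_pos (by linarith) h2
  have h4 : 2 * ρ * K * (a0 * ε) = c * (ρ + 1) * (a0 * ε) := by rw [hKρ]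
  have h5 : 0 ≤ K * (K - c) * ε ^ 2 :=
    mul_nonneg (mul_nonneg hK0 (by linarith)) (sq_nonneg ε)
  nlinarith [h, h3, h4, h5]

/-- Linear convergence of inexact accelerated gradient descent under strong convexity on
a subspace, with geometrically decaying errors `ε_k² = ε₁² θ^{k−1}`:
(i) if `θ ≠ 1 − 1/√κ` then `F(y^k) − F(y*) ≤ M max(1 − 1/√κ, θ)^k`;
(ii) if `θ = 1 − 1/√κ` then `F(y^k) − F(y*) ≤ M k² (1 − 1/√κ)^k`. -/
theorem stmt11 {m : ℕ} (μ L : ℝ) (hμ : 0 < μ) (hμL : μ < L)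
    (V : Submodule ℝ (EuclideanSpace ℝ (Fin m)))
    (F : EuclideanSpace ℝ (Fin m) → ℝ)
    (hFconv : ConvexOn ℝ Set.univ F)
    (hFdiff : Differentiable ℝ F)
    (hFsmooth : ∀ u v : EuclideanSpace ℝ (Fin m),
      ‖gradient F u - gradient F v‖ ≤ L * ‖u - v‖)
    (hFsc : ∀ u ∈ V, ∀ v ∈ V, ∀ θ' : ℝ, 0 ≤ θ' → θ' ≤ 1 →
      F (θ' • u + (1 - θ') • v) ≤ θ' * F u + (1 - θ') * F v
        - μ / 2 * (θ' * (1 - θ') * ‖u - v‖ ^ 2))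
    (hFgradV : ∀ v ∈ V, gradient F v ∈ V)
    (ystar : EuclideanSpace ℝ (Fin m)) (hystarV : ystar ∈ V)
    (hystar : ∀ z, F ystar ≤ F z)
    (κ β : ℝ) (hκ : κ = L / μ) (hβ : β = (Real.sqrt κ - 1) / (Real.sqrt κ + 1))
    (θ : ℝ) (hθ : θ ∈ Set.Ioo (0 : ℝ) 1)
    (ε : ℕ → ℝ) (hε : ∀ k, 0 ≤ ε k)
    (hεgeo : ∀ k : ℕ, 1 ≤ k → ε k ^ 2 = ε 1 ^ 2 * θ ^ (k - 1))
    (y v : ℕ → EuclideanSpace ℝ (Fin m))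
    (e : ℕ → EuclideanSpace ℝ (Fin m))
    (hy0 : y 0 = 0) (hv0 : v 0 = 0)
    (heV : ∀ k, e (k + 1) ∈ V)
    (heε : ∀ k, ‖e (k + 1)‖ ≤ ε (k + 1))
    (hyk : ∀ k, y (k + 1) = v k - (1 / L) • (gradient F (v k) + e (k + 1)))
    (hvk : ∀ k, v (k + 1) = y (k + 1) + β • (y (k + 1) - y k)) :
    (θ ≠ 1 - 1 / Real.sqrt κ →
      ∃ M > 0, ∀ k : ℕ, 1 ≤ k →
        F (y k) - F ystar ≤ M * max (1 - 1 / Real.sqrt κ) θ ^ k) ∧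
    (θ = 1 - 1 / Real.sqrt κ →
      ∃ M > 0, ∀ k : ℕ, 1 ≤ k →
        F (y k) - F ystar ≤ M * ((k : ℝ) ^ 2 * (1 - 1 / Real.sqrt κ) ^ k)) := by
  have hL : 0 < L := hμ.trans hμL
  have hκ1 : 1 < κ := by rw [hκ]; exact (one_lt_div hμ).mpr hμL
  set s := Real.sqrt κ with hsdef
  have hs1 : 1 < s := by
    rw [hsdef, show (1:ℝ) = Real.sqrt 1 by simp]
    exact Real.sqrt_lt_sqrt (by norm_num) hκ1
  have hs0 : 0 < s := one_pos.trans hs1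
  have hss : s ^ 2 = L / μ := by
    rw [hsdef, Real.sq_sqrt (by linarith : (0:ℝ) ≤ κ)]; exact hκ
  have hr0 : 0 < 1 - 1 / s := by
    have : 1 / s < 1 := by rw [div_lt_one hs0]; exact hs1
    linarith
  have hr1 : 1 - 1 / s < 1 := by
    have : 0 < 1 / s := by positivity
    linarith
  -- iterates stay in V
  have hmem : ∀ k, y k ∈ V ∧ v k ∈ V := by
    intro k
    induction k with
    | zero => rw [hy0, hv0]; exact ⟨V.zero_mem, V.zero_mem⟩
    | succ n ih =>
      have hy1 : y (n + 1) ∈ V := by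
        rw [hyk n]
        exact V.sub_mem ih.2 (V.smul_mem _ (V.add_mem (hFgradV _ ih.2) (heV n)))
      exact ⟨hy1, by rw [hvk n]; exact V.add_mem hy1 (V.smul_mem _ (V.sub_mem hy1 ih.1))⟩
  -- first order strong convexity on V
  have hfo : ∀ u ∈ V, ∀ w ∈ V,
      F u + ⟪gradient F u, w - u⟫ + μ / 2 * ‖w - u‖ ^ 2 ≤ F w := by
    intro u hu w hw
    exact stmt11_firstOrderSC F hFdiff μ u w (fun t ht0 ht1 => hFsc w hw u hu t ht0 ht1)
  -- gradient vanishes at the minimizer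
  have hgz : gradient F ystar = 0 := by
    have h1 : IsLocalMin F ystar := Filter.Eventually.of_forall (fun z => hystar z)
    rw [gradient, h1.fderiv_eq_zero, map_zero]
  -- quadratic growth
  have hquad : ∀ w ∈ V, μ / 2 * ‖w - ystar‖ ^ 2 ≤ F w - F ystar := by
    intro w hw
    have := hfo ystar hystarV w hw
    rw [hgz] at this
    simp only [inner_zero_left] at this
    linarith
  -- Lyapunov function
  set z : ℕ → EuclideanSpace ℝ (Fin m) := fun k => (s + 1) • v k - s • y k with hzdef
  set Φ : ℕ → ℝ := fun k => F (y k) - F ystar + μ / 2 * ‖z k - ystar‖ ^ 2 with hΦdef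
  have hΦnn : ∀ k, 0 ≤ Φ k := by
    intro k
    have h1 := hystar (y k)
    have h2 : 0 ≤ μ / 2 * ‖z k - ystar‖ ^ 2 := by positivity
    simp only [hΦdef]
    linarith
  have hΦF : ∀ k, F (y k) - F ystar ≤ Φ k := by
    intro k
    have h2 : 0 ≤ μ / 2 * ‖z k - ystar‖ ^ 2 := by positivity
    simp only [hΦdef]
    linarith
  set a : ℕ → ℝ := fun k => Real.sqrt (Φ k) with hadef
  have hann : ∀ k, 0 ≤ a k := fun k => Real.sqrt_nonneg _
  have hasq : ∀ k, a k ^ 2 = Φ k := fun k => Real.sq_sqrt (hΦnn k)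
  set c := Real.sqrt (2 / μ) with hcdef
  have hc0 : 0 < c := Real.sqrt_pos.mpr (by positivity)
  have hcsq : c ^ 2 = 2 / μ := Real.sq_sqrt (by positivity)
  -- distance to minimizer bounded by Lyapunov
  have hna : ∀ k, ‖y k - ystar‖ ≤ c * a k := by
    intro k
    have h1 := hquad (y k) (hmem k).1
    have h2 : μ * ‖y k - ystar‖ ^ 2 ≤ 2 * Φ k := by
      have := hΦF k
      linarith
    have h3 : ‖y k - ystar‖ ^ 2 ≤ (c * a k) ^ 2 := by
      have : (c * a k) ^ 2 = 2 / μ * Φ k := by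
        rw [mul_pow, hcsq, hasq]
      rw [this, div_mul_eq_mul_div, le_div_iff₀ hμ]
      linarith
    calc ‖y k - ystar‖ = Real.sqrt (‖y k - ystar‖ ^ 2) :=
          (Real.sqrt_sq (norm_nonneg _)).symm
      _ ≤ Real.sqrt ((c * a k) ^ 2) := Real.sqrt_le_sqrt h3
      _ = c * a k := Real.sqrt_sq (by positivity)
  -- one-step Lyapunov inequality
  have hstep : ∀ k, Φ (k + 1) ≤ (1 - 1 / s) * Φ k + c * ε (k + 1) * (a (k + 1) + a k) := by
    intro k
    have hsne : s + 1 ≠ 0 := by positivity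
    have hz1 : z (k + 1) = s • y (k + 1) - (s - 1) • y k := by
      simp only [hzdef]
      rw [hvk k, hβ]
      match_scalars <;> field_simp <;> ring
    have hkey := stmt11_keyStep μ L s hμ hL hs1 hss (v k) (y k) (y (k + 1)) (z k) (z (k + 1))
      ystar (gradient F (v k)) (e (k + 1)) (F (y (k + 1))) (F (v k)) (F (y k)) (F ystar)
      (hyk k) (by simp only [hzdef]) hz1
      (stmt11_descent F hFdiff L hL hFsmooth (v k) (y (k + 1)))
      (hfo (v k) (hmem k).2 ystar hystarV)
      (by
        have := hfo (v k) (hmem k).2 (y k) (hmem k).1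
        have h2 : 0 ≤ μ / 2 * ‖y k - v k‖ ^ 2 := by positivity
        linarith)
    have hb1 := hna (k + 1)
    have hb2 := hna k
    have herr : ‖e (k + 1)‖ * (‖y (k + 1) - ystar‖ + (1 - 1 / s) * ‖y k - ystar‖) ≤
        c * ε (k + 1) * (a (k + 1) + a k) := by
      have h1 : ‖y (k + 1) - ystar‖ + (1 - 1 / s) * ‖y k - ystar‖ ≤ c * (a (k + 1) + a k) := by
        have h2 : (1 - 1 / s) * ‖y k - ystar‖ ≤ ‖y k - ystar‖ := by
          nlinarith [norm_nonneg (y k - ystar)]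
        have h3 : ‖y k - ystar‖ ≤ c * a k := hb2
        nlinarith [hb1]
      calc ‖e (k + 1)‖ * (‖y (k + 1) - ystar‖ + (1 - 1 / s) * ‖y k - ystar‖)
          ≤ ε (k + 1) * (c * (a (k + 1) + a k)) := by
            apply mul_le_mul (heε k) h1 _ (hε (k + 1))
            positivity
        _ = c * ε (k + 1) * (a (k + 1) + a k) := by ring
    simp only [hΦdef]
    linarith [hkey, herr]
  -- square root recursion
  set ρ := Real.sqrt (1 - 1 / s) with hρdef
  have hρ0 : 0 < ρ := Real.sqrt_pos.mpr hr0
  have hρsq : ρ ^ 2 = 1 - 1 / s := Real.sq_sqrt hr0.le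
  have hρ1 : ρ ≤ 1 := by
    rw [hρdef]
    exact Real.sqrt_le_one.mpr (by linarith)
  set K := c * (1 + 1 / ρ) / 2 with hKdef
  have hK0 : 0 ≤ K := by
    rw [hKdef]
    have h1 : 0 < 1 / ρ := by exact div_pos one_pos hρ0
    nlinarith [hc0.le]
  have hrec : ∀ k, a (k + 1) ≤ ρ * a k + K * ε (k + 1) := by
    intro k
    apply stmt11_quadRec (a k) (a (k + 1)) (ε (k + 1)) c ρ K hρ0 hρ1 hc0.le (hε (k + 1))
      (hann k) (hann (k + 1)) hKdef
    rw [hasq, hasq, hρsq]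
    have := hstep k
    linarith
  -- geometric form of the errors
  set σ := Real.sqrt θ with hσdef
  have hσ0 : 0 < σ := Real.sqrt_pos.mpr hθ.1
  have hσsq : σ ^ 2 = θ := Real.sq_sqrt hθ.1.le
  have hεpow : ∀ k : ℕ, ε (k + 1) = ε 1 * σ ^ k := by
    intro k
    have h1 := hεgeo (k + 1) (by omega)
    simp only [Nat.add_sub_cancel] at h1
    have h2 : (ε 1 * σ ^ k) ^ 2 = ε 1 ^ 2 * θ ^ k := by
      rw [mul_pow, ← pow_mul, mul_comm k 2, pow_mul, hσsq]
    have h3 : ε (k + 1) ^ 2 = (ε 1 * σ ^ k) ^ 2 := by rw [h1, h2]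
    have h4 := congrArg Real.sqrt h3
    rwa [Real.sqrt_sq (hε (k + 1)), Real.sqrt_sq (mul_nonneg (hε 1) (pow_nonneg hσ0.le k))] at h4
  have hrec2 : ∀ k, a (k + 1) ≤ ρ * a k + K * ε 1 * σ ^ k := by
    intro k
    have := hrec k
    rw [hεpow k] at this
    linarith [this]
  have hKε : 0 ≤ K * ε 1 := mul_nonneg hK0 (hε 1)
  constructor
  · -- case θ ≠ 1 - 1/√κ
    intro hne
    have hρσ : ρ ≠ σ := by
      intro h
      apply hne
      rw [← hσsq, ← h, hρsq]
    set R := max ρ σ with hRdef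
    have hR0 : 0 < R := lt_of_lt_of_le hρ0 (le_max_left _ _)
    set D := |ρ - σ| with hDdef
    have hD0 : 0 < D := abs_pos.mpr (sub_ne_zero.mpr hρσ)
    -- partial sum bound
    have hsum : ∀ k, a k ≤ a 0 * ρ ^ k + K * ε 1 * ((ρ ^ k - σ ^ k) / (ρ - σ)) := by
      intro k
      induction k with
      | zero => simp
      | succ n ih =>
        have h1 := hrec2 n
        have h2 : ρ * a n ≤ ρ * (a 0 * ρ ^ n + K * ε 1 * ((ρ ^ n - σ ^ n) / (ρ - σ))) :=
          mul_le_mul_of_nonneg_left ih hρ0.le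
        have h3 : ρ * (a 0 * ρ ^ n + K * ε 1 * ((ρ ^ n - σ ^ n) / (ρ - σ))) + K * ε 1 * σ ^ n
            = a 0 * ρ ^ (n + 1) + K * ε 1 * ((ρ ^ (n + 1) - σ ^ (n + 1)) / (ρ - σ)) := by
          have hne2 : ρ - σ ≠ 0 := sub_ne_zero.mpr hρσ
          field_simp
          ring
        linarith [h1, h2, h3.le, h3.ge]
    -- bounding the geometric quotient
    have hquot : ∀ k, (ρ ^ k - σ ^ k) / (ρ - σ) ≤ R ^ k / D := by
      intro k
      rcases lt_or_gt_of_ne hρσ with hlt | hgt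
      · have hR : R = σ := max_eq_right hlt.le
        have hD : D = σ - ρ := by rw [hDdef, abs_of_neg (by linarith)]; ring
        have h1 : (ρ ^ k - σ ^ k) / (ρ - σ) = (σ ^ k - ρ ^ k) / (σ - ρ) := by
          rw [div_eq_div_iff (by intro h; apply hρσ; linarith [sub_eq_zero.mp h])
            (by intro h; apply hρσ; linarith [sub_eq_zero.mp h])]
          ring
        rw [h1, hR, hD]
        apply (div_le_div_iff_of_pos_right (by linarith : (0:ℝ) < σ - ρ)).mpr
        nlinarith [pow_nonneg hρ0.le k]
      · have hR : R = ρ := max_eq_left hgt.le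
        have hD : D = ρ - σ := by rw [hDdef, abs_of_pos (by linarith)]
        rw [hR, hD]
        apply (div_le_div_iff_of_pos_right (by linarith : (0:ℝ) < ρ - σ)).mpr
        nlinarith [pow_nonneg hσ0.le k]
    have hCb : ∀ k, a k ≤ (a 0 + K * ε 1 / D) * R ^ k := by
      intro k
      have h1 := hsum k
      have h2 : K * ε 1 * ((ρ ^ k - σ ^ k) / (ρ - σ)) ≤ K * ε 1 * (R ^ k / D) :=
        mul_le_mul_of_nonneg_left (hquot k) hKε
      have h3 : a 0 * ρ ^ k ≤ a 0 * R ^ k := by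
        apply mul_le_mul_of_nonneg_left _ (hann 0)
        exact pow_le_pow_left₀ hρ0.le (le_max_left _ _) k
      have h4 : K * ε 1 * (R ^ k / D) = K * ε 1 / D * R ^ k := by ring
      calc a k ≤ a 0 * ρ ^ k + K * ε 1 * ((ρ ^ k - σ ^ k) / (ρ - σ)) := h1
        _ ≤ a 0 * R ^ k + K * ε 1 * (R ^ k / D) := by linarith
        _ = (a 0 + K * ε 1 / D) * R ^ k := by rw [h4]; ring
    set C := a 0 + K * ε 1 / D with hCdef
    have hC0 : 0 ≤ C := by
      have : 0 ≤ K * ε 1 / D := div_nonneg hKε hD0.le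
      rw [hCdef]
      linarith [hann 0]
    refine ⟨C ^ 2 + 1, by positivity, ?_⟩
    intro k hk
    have hR2 : R ^ 2 = max (1 - 1 / s) θ := by
      rcases le_total ρ σ with h | h
      · rw [hRdef, max_eq_right h, hσsq, max_eq_right]
        rw [← hρsq, ← hσsq]
        exact pow_le_pow_left₀ hρ0.le h 2
      · rw [hRdef, max_eq_left h, hρsq, max_eq_left]
        rw [← hρsq, ← hσsq]
        exact pow_le_pow_left₀ (Real.sqrt_nonneg _) h 2
    have h1 : Φ k ≤ C ^ 2 * (max (1 - 1 / s) θ) ^ k := by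
      have h2 : a k ^ 2 ≤ (C * R ^ k) ^ 2 := by
        apply pow_le_pow_left₀ (hann k) (hCb k)
      rw [hasq] at h2
      calc Φ k ≤ (C * R ^ k) ^ 2 := h2
        _ = C ^ 2 * (R ^ 2) ^ k := by ring
        _ = C ^ 2 * (max (1 - 1 / s) θ) ^ k := by rw [hR2]
    have h5 : (0:ℝ) ≤ max (1 - 1 / s) θ ^ k := by
      apply pow_nonneg
      exact le_trans hr0.le (le_max_left _ _)
    calc F (y k) - F ystar ≤ Φ k := hΦF k
      _ ≤ C ^ 2 * max (1 - 1 / s) θ ^ k := h1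
      _ ≤ (C ^ 2 + 1) * max (1 - 1 / s) θ ^ k := by nlinarith
  · -- case θ = 1 - 1/√κ
    intro heq
    have hρσ : σ = ρ := by
      rw [hσdef, hρdef, heq]
    have hsum : ∀ k, a k ≤ (a 0 + K * ε 1 * k / ρ) * ρ ^ k := by
      intro k
      induction k with
      | zero => simp
      | succ n ih =>
        have h1 := hrec2 n
        rw [hρσ] at h1
        have h2 : ρ * a n ≤ ρ * ((a 0 + K * ε 1 * n / ρ) * ρ ^ n) :=
          mul_le_mul_of_nonneg_left ih hρ0.le
        have h3 : ρ * ((a 0 + K * ε 1 * n / ρ) * ρ ^ n) + K * ε 1 * ρ ^ n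
            = (a 0 + K * ε 1 * (n + 1) / ρ) * ρ ^ (n + 1) := by
          field_simp
          ring
        push_cast
        linarith [h1, h2, h3.le]
    have hC0 : 0 ≤ a 0 + K * ε 1 / ρ := by
      have : 0 ≤ K * ε 1 / ρ := div_nonneg hKε hρ0.le
      linarith [hann 0]
    refine ⟨(a 0 + K * ε 1 / ρ) ^ 2 + 1, by positivity, ?_⟩
    intro k hk
    have hk1 : (1:ℝ) ≤ (k:ℝ) := by exact_mod_cast hk
    have h1 : a k ≤ (a 0 + K * ε 1 / ρ) * k * ρ ^ k := by
      have h2 := hsum k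
      have h3 : a 0 + K * ε 1 * k / ρ ≤ (a 0 + K * ε 1 / ρ) * k := by
        have : 0 ≤ K * ε 1 / ρ := by positivity
        have h4 : a 0 ≤ a 0 * k := by nlinarith [hann 0]
        have h5 : K * ε 1 * k / ρ = K * ε 1 / ρ * k := by ring
        nlinarith [hann 0]
      calc a k ≤ (a 0 + K * ε 1 * k / ρ) * ρ ^ k := h2
        _ ≤ (a 0 + K * ε 1 / ρ) * k * ρ ^ k := by
            apply mul_le_mul_of_nonneg_right _ (pow_nonneg hρ0.le k)
            exact h3
    have h6 : Φ k ≤ ((a 0 + K * ε 1 / ρ) ^ 2) * ((k:ℝ) ^ 2 * (1 - 1 / s) ^ k) := by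
      have h2 : a k ^ 2 ≤ ((a 0 + K * ε 1 / ρ) * k * ρ ^ k) ^ 2 := by
        apply pow_le_pow_left₀ (hann k) h1
      rw [hasq] at h2
      calc Φ k ≤ ((a 0 + K * ε 1 / ρ) * k * ρ ^ k) ^ 2 := h2
        _ = (a 0 + K * ε 1 / ρ) ^ 2 * ((k:ℝ) ^ 2 * (ρ ^ 2) ^ k) := by ring
        _ = (a 0 + K * ε 1 / ρ) ^ 2 * ((k:ℝ) ^ 2 * (1 - 1 / s) ^ k) := by rw [hρsq]
    have h7 : (0:ℝ) ≤ (k:ℝ) ^ 2 * (1 - 1 / s) ^ k := by positivity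
    calc F (y k) - F ystar ≤ Φ k := hΦF k
      _ ≤ (a 0 + K * ε 1 / ρ) ^ 2 * ((k:ℝ) ^ 2 * (1 - 1 / s) ^ k) := h6
      _ ≤ ((a 0 + K * ε 1 / ρ) ^ 2 + 1) * ((k:ℝ) ^ 2 * (1 - 1 / s) ^ k) := by nlinarith
end
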